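/- Commutative ladder lemma: consider a commutative diagram of long exact sequences of finite-dimensional vector spaces ... → Aₗ → Bₗ → Cₗ → Aₗ₊₁ → ... and ... → A'ₗ → B'ₗ → C'ₗ → A'ₗ₊₁ → ... with vertical maps αₗ : Aₗ → A'ₗ, βₗ : Bₗ → B'ₗ, γₗ : Cₗ → C'ₗ. If every αₗ is an isomorphism and every βₗ and γₗ is injective, then for each l the induced map coker(βₗ) → coker(γₗ) is an isomorphism; in particular B'ₗ ≅ Bₗ ⊕ (C'ₗ / im γₗ). -/

import Mathlib

open Function LinearMap

/-- Commutative ladder lemma: given a commutative diagram of long exact sequences of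
finite-dimensional `ℂ`-vector spaces
`... → Aₗ → Bₗ → Cₗ → Aₗ₊₁ → ...` and `... → A'ₗ → B'ₗ → C'ₗ → A'ₗ₊₁ → ...`
with vertical maps `αₗ, βₗ, γₗ`, if every `αₗ` is an isomorphism and every `βₗ`, `γₗ`
is injective, then the induced map `coker (βₗ) → coker (γₗ)` is an isomorphism;
in particular `B'ₗ ≅ Bₗ ⊕ C'ₗ / im γₗ`. -/
theorem commutative_ladder_coker_iso
    (A B C A' B' C' : ℤ → Type)
    [∀ l, AddCommGroup (A l)] [∀ l, Module ℂ (A l)] [∀ l, FiniteDimensional ℂ (A l)]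
    [∀ l, AddCommGroup (B l)] [∀ l, Module ℂ (B l)] [∀ l, FiniteDimensional ℂ (B l)]
    [∀ l, AddCommGroup (C l)] [∀ l, Module ℂ (C l)] [∀ l, FiniteDimensional ℂ (C l)]
    [∀ l, AddCommGroup (A' l)] [∀ l, Module ℂ (A' l)] [∀ l, FiniteDimensional ℂ (A' l)]
    [∀ l, AddCommGroup (B' l)] [∀ l, Module ℂ (B' l)] [∀ l, FiniteDimensional ℂ (B' l)]
    [∀ l, AddCommGroup (C' l)] [∀ l, Module ℂ (C' l)] [∀ l, FiniteDimensional ℂ (C' l)]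
    (f : ∀ l, A l →ₗ[ℂ] B l) (g : ∀ l, B l →ₗ[ℂ] C l) (δ : ∀ l, C l →ₗ[ℂ] A (l + 1))
    (f' : ∀ l, A' l →ₗ[ℂ] B' l) (g' : ∀ l, B' l →ₗ[ℂ] C' l) (δ' : ∀ l, C' l →ₗ[ℂ] A' (l + 1))
    (hex1 : ∀ l, Exact (f l) (g l)) (hex2 : ∀ l, Exact (g l) (δ l))
    (hex3 : ∀ l, Exact (δ l) (f (l + 1)))
    (hex1' : ∀ l, Exact (f' l) (g' l)) (hex2' : ∀ l, Exact (g' l) (δ' l))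
    (hex3' : ∀ l, Exact (δ' l) (f' (l + 1)))
    (α : ∀ l, A l →ₗ[ℂ] A' l) (β : ∀ l, B l →ₗ[ℂ] B' l) (γ : ∀ l, C l →ₗ[ℂ] C' l)
    (hsq1 : ∀ l, (β l).comp (f l) = (f' l).comp (α l))
    (hsq2 : ∀ l, (γ l).comp (g l) = (g' l).comp (β l))
    (hsq3 : ∀ l, (α (l + 1)).comp (δ l) = (δ' l).comp (γ l))
    (hα : ∀ l, Bijective (α l)) (hβ : ∀ l, Injective (β l)) (hγ : ∀ l, Injective (γ l)) :
    ∀ l, (∀ hle : range (β l) ≤ (range (γ l)).comap (g' l),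
        Bijective (Submodule.mapQ (range (β l)) (range (γ l)) (g' l) hle)) ∧
      Nonempty (B' l ≃ₗ[ℂ] B l × (C' l ⧸ range (γ l))) := by
  intro l
  have hle : range (β l) ≤ (range (γ l)).comap (g' l) := by
    rintro _ ⟨b, rfl⟩
    exact ⟨g l b, LinearMap.congr_fun (hsq2 l) b⟩
  have key : Bijective (Submodule.mapQ (range (β l)) (range (γ l)) (g' l) hle) := by
    constructor
    · rw [← LinearMap.ker_eq_bot, eq_bot_iff]
      intro x hx
      obtain ⟨b', rfl⟩ := Submodule.Quotient.mk_surjective _ x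
      rw [Submodule.mem_bot, Submodule.Quotient.mk_eq_zero]
      rw [LinearMap.mem_ker, Submodule.mapQ_apply, Submodule.Quotient.mk_eq_zero] at hx
      obtain ⟨c, hc⟩ := hx
      have h1 : α (l + 1) (δ l c) = 0 := by
        have h := LinearMap.congr_fun (hsq3 l) c
        simp only [LinearMap.comp_apply] at h
        rw [h, hc]
        exact (hex2' l).apply_apply_eq_zero b'
      have h2 : δ l c = 0 := (hα (l + 1)).injective (by rw [h1, map_zero])
      obtain ⟨b, hb⟩ := ((hex2 l) c).mp h2
      have h3 : g' l (b' - β l b) = 0 := by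
        have h := LinearMap.congr_fun (hsq2 l) b
        simp only [LinearMap.comp_apply] at h
        rw [map_sub, ← h, hb, hc, sub_self]
      obtain ⟨a', ha'⟩ := ((hex1' l) _).mp h3
      obtain ⟨a, ha⟩ := (hα l).surjective a'
      refine ⟨b + f l a, ?_⟩
      have h := LinearMap.congr_fun (hsq1 l) a
      simp only [LinearMap.comp_apply] at h
      rw [map_add, h, ha, ha']
      abel
    · intro x
      obtain ⟨c', rfl⟩ := Submodule.Quotient.mk_surjective _ x
      obtain ⟨a, ha⟩ := (hα (l + 1)).surjective (δ' l c')
      have hfa : f (l + 1) a = 0 := by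
        apply hβ (l + 1)
        have h := LinearMap.congr_fun (hsq1 (l + 1)) a
        simp only [LinearMap.comp_apply] at h
        rw [h, ha, map_zero]
        exact (hex3' l).apply_apply_eq_zero c'
      obtain ⟨c, hcδ⟩ := ((hex3 l) a).mp hfa
      have h4 : δ' l (c' - γ l c) = 0 := by
        have h := LinearMap.congr_fun (hsq3 l) c
        simp only [LinearMap.comp_apply] at h
        rw [map_sub, ← h, hcδ, ha, sub_self]
      obtain ⟨b', hb'⟩ := ((hex2' l) _).mp h4
      refine ⟨Submodule.Quotient.mk b', ?_⟩
      rw [Submodule.mapQ_apply]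
      rw [Submodule.Quotient.eq]
      rw [hb']
      exact ⟨-c, by simp⟩
  refine ⟨fun hle' => key, ?_⟩
  obtain ⟨q, hq⟩ := Submodule.exists_isCompl (range (β l))
  exact ⟨(Submodule.prodEquivOfIsCompl _ q hq).symm.trans
    (LinearEquiv.prodCongr (LinearEquiv.ofInjective (β l) (hβ l)).symm
      ((Submodule.quotientEquivOfIsCompl _ q hq).symm.trans
        (LinearEquiv.ofBijective _ key)))⟩
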